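/- Suppose A ∈ ℝ^{n×n} and H(A) = (A + Aᵀ)/2 is negative semidefinite. Then rank H(A) ≤ rank A. -/

import Mathlib

open Matrix

theorem stmt3 (n : ℕ) (A : Matrix (Fin n) (Fin n) ℝ)
    (H : Matrix (Fin n) (Fin n) ℝ) (hH : H = (1/2 : ℝ) • (A + Aᵀ))
    (hnsd : ∀ y : Fin n → ℝ, y ⬝ᵥ (H *ᵥ y) ≤ 0) :
    H.rank ≤ A.rank := by
  have hsym : Hᵀ = H := by
    subst hH; simp [transpose_smul, transpose_add, add_comm]
  have hps : (-H).PosSemidef := by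
    rw [posSemidef_iff_dotProduct_mulVec]
    constructor
    · ext i j
      simp [conjTranspose, ← transpose_map]
      have := congrFun (congrFun hsym j) i
      simpa [transpose_apply] using this.symm
    · intro x
      have := hnsd x
      simp only [star_trivial, neg_mulVec, dotProduct_neg]
      linarith
  -- kernel inclusion
  have hker : LinearMap.ker A.mulVecLin ≤ LinearMap.ker H.mulVecLin := by
    intro x hx
    have hAx : A *ᵥ x = 0 := hx
    have hq : x ⬝ᵥ (H *ᵥ x) = 0 := by
      subst hH
      rw [smul_mulVec, add_mulVec, dotProduct_smul, dotProduct_add, hAx,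
        dotProduct_zero, zero_add]
      have : x ⬝ᵥ (Aᵀ *ᵥ x) = (A *ᵥ x) ⬝ᵥ x := by
        rw [dotProduct_mulVec, vecMul_transpose]
      rw [this, hAx, zero_dotProduct, smul_zero]
    have h0 : star x ⬝ᵥ (-H) *ᵥ x = 0 := by
      simp only [star_trivial, neg_mulVec, dotProduct_neg, hq, neg_zero]
    have := (hps.dotProduct_mulVec_zero_iff x).mp h0
    have hHx : H *ᵥ x = 0 := by
      have : -(H *ᵥ x) = 0 := by rwa [neg_mulVec] at this
      simpa [neg_eq_zero] using this
    exact hHx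
  have hkd : Module.finrank ℝ (LinearMap.ker A.mulVecLin) ≤
      Module.finrank ℝ (LinearMap.ker H.mulVecLin) :=
    Submodule.finrank_mono hker
  have rnA := LinearMap.finrank_range_add_finrank_ker A.mulVecLin
  have rnH := LinearMap.finrank_range_add_finrank_ker H.mulVecLin
  rw [Matrix.rank, Matrix.rank]
  omega
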